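/- Let n > m ≥ 0 and define H(j,k) = (−1)^{b(j,k)} for j, k ∈ {0, …, 2ⁿ − 1}, where b(j,k) is the number of bit positions at which the binary expansions of j and k both have a 1. For 0 ≤ i ≤ 2^{n−m} − 1, let W_i be the span in ℝ^{2ⁿ−2^m} of the vectors (H(j, i·2^m + r))_{2^m ≤ j ≤ 2ⁿ−1} for 0 ≤ r ≤ 2^m − 1. Then the subspaces W_i are pairwise equi-distant in the chordal distance: for all i₁ ≠ i₂, dist(W_{i₁}, W_{i₂}) = √(2^m − 2^m/(2^{n−m} − 1)²). -/

import Mathlib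

open scoped InnerProductSpace

/-- `bitOverlap j k` is the number of bit positions at which the binary
expansions of `j` and `k` both have a `1`. -/
def bitOverlap (j k : ℕ) : ℕ := (Nat.land j k).bits.count true

namespace Aux15

lemma pc_two_mul (x : ℕ) : (2*x).bits.count true = x.bits.count true := by
  rcases Nat.eq_zero_or_pos x with h|h
  · simp [h, Nat.zero_bits]
  · simp [Nat.bit0_bits x h.ne']

lemma pc_two_mul_add_one (x : ℕ) :
    (2*x+1).bits.count true = x.bits.count true + 1 := by
  simp [Nat.bit1_bits x]

lemma land_bit (a c ε δ : ℕ) (hε : ε ≤ 1) (hδ : δ ≤ 1) :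
    Nat.land (2*a+ε) (2*c+δ) = 2 * Nat.land a c + ε*δ := by
  have h := Nat.bitwise_bit (f := and) (by simp) (ε = 1) a (δ = 1) c
  interval_cases ε <;> interval_cases δ <;>
    simpa [Nat.land, Nat.bit, Bool.and] using h

lemma bitOverlap_bit (a c ε δ : ℕ) (hε : ε ≤ 1) (hδ : δ ≤ 1) :
    bitOverlap (2*a+ε) (2*c+δ) = bitOverlap a c + ε*δ := by
  unfold bitOverlap
  rw [land_bit a c ε δ hε hδ]
  have hle : ε * δ ≤ 1 := Nat.mul_le_mul hε hδ
  rcases Nat.eq_zero_or_pos (ε*δ) with h|h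
  · rw [h, add_zero, add_zero, pc_two_mul]
  · have : ε * δ = 1 := by omega
    rw [this, pc_two_mul_add_one]

lemma bitOverlap_zero_left (k : ℕ) : bitOverlap 0 k = 0 := by
  simp [bitOverlap, Nat.land, Nat.zero_bits]

lemma sum_range_two_mul (N : ℕ) (f : ℕ → ℝ) :
    ∑ t ∈ Finset.range (2*N), f t = ∑ t ∈ Finset.range N, (f (2*t) + f (2*t+1)) := by
  induction N with
  | zero => simp
  | succ N ih =>
    have : 2 * (N+1) = (2*N) + 1 + 1 := by ring
    rw [this, Finset.sum_range_succ, Finset.sum_range_succ, ih, Finset.sum_range_succ, add_assoc]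

lemma orth : ∀ s k k' : ℕ, k < 2^s → k' < 2^s →
    ∑ t ∈ Finset.range (2^s), ((-1:ℝ)^bitOverlap t k * (-1)^bitOverlap t k')
      = if k = k' then (2^s : ℝ) else 0 := by
  intro s
  induction s with
  | zero =>
    intro k k' hk hk'
    interval_cases k
    interval_cases k'
    simp [bitOverlap_zero_left]
  | succ s ih =>
    intro k k' hk hk'
    have hsplit : (2:ℕ)^(s+1) = 2 * 2^s := by ring
    rw [hsplit, sum_range_two_mul]
    have hk2 : k / 2 < 2^s := by omega
    have hk'2 : k' / 2 < 2^s := by omega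
    have hb : ∀ t ε, ε ≤ 1 → ∀ u : ℕ, bitOverlap (2*t+ε) u = bitOverlap t (u/2) + ε*(u%2) := by
      intro t ε hε u
      have := bitOverlap_bit t (u/2) ε (u%2) hε (by omega)
      rw [← this]
      congr 1
      omega
    have key : ∀ t : ℕ,
        ((-1:ℝ)^bitOverlap (2*t) k * (-1)^bitOverlap (2*t) k'
          + (-1:ℝ)^bitOverlap (2*t+1) k * (-1)^bitOverlap (2*t+1) k')
        = ((-1:ℝ)^bitOverlap t (k/2) * (-1)^bitOverlap t (k'/2)) *
            (1 + (-1:ℝ)^(k%2) * (-1:ℝ)^(k'%2)) := by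
      intro t
      have h0k := hb t 0 (by norm_num) k
      have h0k' := hb t 0 (by norm_num) k'
      have h1k := hb t 1 (by norm_num) k
      have h1k' := hb t 1 (by norm_num) k'
      simp only [Nat.mul_zero, Nat.add_zero, two_mul] at *
      rw [h0k, h0k', h1k, h1k']
      simp [Nat.zero_add] at *
      ring
    simp only [key]
    rcases eq_or_ne (k % 2) (k' % 2) with hpar | hpar
    · have hfac : (1 + (-1:ℝ)^(k%2) * (-1:ℝ)^(k'%2)) = 2 := by
        rw [hpar, ← pow_add]
        have : Even (k' % 2 + k' % 2) := ⟨k' % 2, rfl⟩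
        rw [this.neg_one_pow]; norm_num
      simp only [hfac, ← Finset.sum_mul, ih (k/2) (k'/2) hk2 hk'2]
      have hiff : k = k' ↔ k / 2 = k' / 2 := by omega
      by_cases h : k = k'
      · rw [if_pos h, if_pos (hiff.1 h)]; push_cast; ring
      · rw [if_neg h, if_neg (fun hh => h (by omega))]; ring
    · have hfac : (1 + (-1:ℝ)^(k%2) * (-1:ℝ)^(k'%2)) = 0 := by
        have h2 : k % 2 < 2 := Nat.mod_lt _ (by norm_num)
        have h2' : k' % 2 < 2 := Nat.mod_lt _ (by norm_num)
        interval_cases h3 : k % 2 <;> interval_cases h4 : k' % 2 <;> simp_all <;> norm_num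
      rw [hfac]
      have : k ≠ k' := fun h => hpar (by rw [h])
      simp [this]

lemma bitOverlap_mod (t k m : ℕ) (ht : t < 2^m) :
    bitOverlap t k = bitOverlap t (k % 2^m) := by
  unfold bitOverlap
  have hland : Nat.land t k = Nat.land t (k % 2^m) := by
    apply Nat.eq_of_testBit_eq
    intro i
    show (t &&& k).testBit i = (t &&& (k % 2^m)).testBit i
    rw [Nat.testBit_land, Nat.testBit_land, Nat.testBit_mod_two_pow]
    by_cases hi : i < m
    · simp [hi]
    · have : t < 2^i := lt_of_lt_of_le ht (Nat.pow_le_pow_right (by norm_num) (by omega))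
      rw [Nat.testBit_lt_two_pow this]
      simp
  rw [hland]

lemma gram (n m : ℕ) (hmn : m < n) (i i' r r' : ℕ)
    (hi : i < 2^(n-m)) (hi' : i' < 2^(n-m)) (hr : r < 2^m) (hr' : r' < 2^m) :
    ∑ j ∈ Finset.range (2^n - 2^m),
        ((-1:ℝ)^bitOverlap (j+2^m) (i*2^m+r) * (-1)^bitOverlap (j+2^m) (i'*2^m+r'))
      = (if i = i' ∧ r = r' then (2^n:ℝ) else 0) - (if r = r' then (2^m:ℝ) else 0) := by
  have hmn' : m ≤ n := hmn.le
  have h2mn : (2:ℕ)^m ≤ 2^n := Nat.pow_le_pow_right (by norm_num) hmn'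
  have hpowsplit : (2:ℕ)^(n-m) * 2^m = 2^n := by
    rw [← pow_add]; congr 1; omega
  set k := i*2^m + r with hk
  set k' := i'*2^m + r' with hk'
  have hkn : k < 2^n := by
    calc k < (i+1) * 2^m := by rw [hk, add_mul, one_mul]; omega
    _ ≤ 2^(n-m) * 2^m := Nat.mul_le_mul_right _ (by omega)
    _ = 2^n := hpowsplit
  have hk'n : k' < 2^n := by
    calc k' < (i'+1) * 2^m := by rw [hk', add_mul, one_mul]; omega
    _ ≤ 2^(n-m) * 2^m := Nat.mul_le_mul_right _ (by omega)
    _ = 2^n := hpowsplit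
  have step1 : ∑ j ∈ Finset.range (2^n - 2^m),
        ((-1:ℝ)^bitOverlap (j+2^m) k * (-1)^bitOverlap (j+2^m) k')
      = ∑ t ∈ Finset.Ico (2^m) (2^n),
        ((-1:ℝ)^bitOverlap t k * (-1)^bitOverlap t k') := by
    rw [Finset.sum_Ico_eq_sum_range]
    exact Finset.sum_congr rfl fun j _ => by rw [add_comm]
  rw [step1, Finset.sum_Ico_eq_sub _ h2mn, orth n k k' hkn hk'n]
  have hmodk : k % 2^m = r := by
    rw [hk, add_comm, Nat.add_mul_mod_self_right, Nat.mod_eq_of_lt hr]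
  have hmodk' : k' % 2^m = r' := by
    rw [hk', add_comm, Nat.add_mul_mod_self_right, Nat.mod_eq_of_lt hr']
  have step2 : ∑ t ∈ Finset.range (2^m),
        ((-1:ℝ)^bitOverlap t k * (-1)^bitOverlap t k')
      = if r = r' then (2^m:ℝ) else 0 := by
    have hcong : ∀ t ∈ Finset.range (2^m),
        ((-1:ℝ)^bitOverlap t k * (-1)^bitOverlap t k')
          = ((-1:ℝ)^bitOverlap t r * (-1)^bitOverlap t r') := by
      intro t ht
      rw [Finset.mem_range] at ht
      rw [bitOverlap_mod t k m ht, bitOverlap_mod t k' m ht, hmodk, hmodk']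
    rw [Finset.sum_congr rfl hcong]
    exact orth m r r' hr hr'
  rw [step2]
  have hiff : k = k' ↔ (i = i' ∧ r = r') := by
    constructor
    · intro h
      have h1 : r = r' := by rw [← hmodk, ← hmodk', h]
      refine ⟨?_, h1⟩
      have : i * 2^m = i' * 2^m := by omega
      exact Nat.eq_of_mul_eq_mul_right (Nat.two_pow_pos m) this
    · rintro ⟨h1, h2⟩; rw [hk, hk', h1, h2]
  by_cases h : k = k'
  · rw [if_pos h, if_pos (hiff.1 h)]
  · rw [if_neg h, if_neg (fun hh => h (hiff.2 hh))]

lemma proj_formula {E : Type*} [NormedAddCommGroup E] [InnerProductSpace ℝ E]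
    {R : Type*} [Fintype R] [DecidableEq R] (w : R → E) (c : ℝ) (hc : c ≠ 0)
    (hgram : ∀ a b, ⟪w a, w b⟫_ℝ = if a = b then c else 0)
    (K : Submodule ℝ E) [K.HasOrthogonalProjection]
    (hK : K = Submodule.span ℝ (Set.range w)) (x : E) :
    (K.orthogonalProjectionOnto x : E) = c⁻¹ • ∑ a, ⟪w a, x⟫_ℝ • w a := by
  rw [← Submodule.starProjection_apply]
  apply Submodule.eq_starProjection_of_mem_of_inner_eq_zero
  · rw [hK]
    exact Submodule.smul_mem _ _ (Submodule.sum_mem _ fun a _ =>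
      Submodule.smul_mem _ _ (Submodule.subset_span ⟨a, rfl⟩))
  · intro u hu
    rw [hK] at hu
    have key : ∀ b, ⟪x - c⁻¹ • ∑ a, ⟪w a, x⟫_ℝ • w a, w b⟫_ℝ = 0 := by
      intro b
      rw [inner_sub_left, real_inner_smul_left, sum_inner]
      have : ∀ a ∈ Finset.univ, ⟪⟪w a, x⟫_ℝ • w a, w b⟫_ℝ
          = if a = b then ⟪w b, x⟫_ℝ * c else 0 := by
        intro a _
        rw [real_inner_smul_left, hgram]
        by_cases h : a = b <;> simp [h]
      rw [Finset.sum_congr rfl this, Finset.sum_ite_eq' _ b]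
      simp [real_inner_comm x (w b)]
      field_simp
      ring
    induction hu using Submodule.span_induction with
    | mem y hy => obtain ⟨b, rfl⟩ := hy; exact key b
    | zero => simp
    | add y z _ _ hy hz => rw [inner_add_right, hy, hz, add_zero]
    | smul t y _ hy => rw [real_inner_smul_right, hy, mul_zero]

end Aux15

/-- The generating vectors of the fusion-frame subspaces. -/
def Aux15.vvec (n m : ℕ) (i : Fin (2^(n-m))) (r : Fin (2^m)) :
    EuclideanSpace ℝ (Fin (2^n - 2^m)) :=
  WithLp.toLp 2 (fun j : Fin (2^n - 2^m) => (-1:ℝ)^bitOverlap (j.val + 2^m) (i.val * 2^m + r.val))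

/-- The subspaces `W_i` in the Walsh–Hadamard fusion frame construction are
pairwise equi-distant in the chordal distance
`dist(W₁, W₂) = √(m − trace(P₁ P₂))`: for `i₁ ≠ i₂`,
`dist(W_{i₁}, W_{i₂}) = √(2^m − 2^m/(2^{n−m} − 1)²)`. -/
theorem stmt_15 (n m : ℕ) (hmn : m < n)
    (W : Fin (2 ^ (n - m)) → Submodule ℝ (EuclideanSpace ℝ (Fin (2 ^ n - 2 ^ m))))
    (hW : ∀ i : Fin (2 ^ (n - m)),
      W i = Submodule.span ℝ (Set.range (fun r : Fin (2 ^ m) =>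
        (WithLp.toLp 2 (fun j : Fin (2 ^ n - 2 ^ m) =>
          ((-1 : ℝ) ^ bitOverlap (j.val + 2 ^ m) (i.val * 2 ^ m + r.val))) :
            EuclideanSpace ℝ (Fin (2 ^ n - 2 ^ m)))))) :
    ∀ i₁ i₂ : Fin (2 ^ (n - m)), i₁ ≠ i₂ →
      Real.sqrt ((2 ^ m : ℝ) -
          LinearMap.trace ℝ (EuclideanSpace ℝ (Fin (2 ^ n - 2 ^ m)))
            ((((W i₁).subtypeL.comp ((W i₁).orthogonalProjectionOnto)).comp
              ((W i₂).subtypeL.comp ((W i₂).orthogonalProjectionOnto))).toLinearMap)) =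
        Real.sqrt ((2 ^ m : ℝ) - (2 ^ m : ℝ) / ((2 ^ (n - m) : ℝ) - 1) ^ 2) := by
  classical
  intro i₁ i₂ hne
  let vv : Fin (2^(n-m)) → Fin (2^m) → EuclideanSpace ℝ (Fin (2^n - 2^m)) :=
    Aux15.vvec n m
  -- inner products of the generating vectors
  have hinner : ∀ (i i' : Fin (2^(n-m))) (r r' : Fin (2^m)),
      ⟪vv i r, vv i' r'⟫_ℝ
        = (if i = i' ∧ r = r' then (2^n:ℝ) else 0) - (if r = r' then (2^m:ℝ) else 0) := by
    intro i i' r r'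
    have h1 : ⟪vv i r, vv i' r'⟫_ℝ
        = ∑ j : Fin (2^n - 2^m), ((-1:ℝ)^bitOverlap (j.val+2^m) (i.val*2^m+r.val)
            * (-1:ℝ)^bitOverlap (j.val+2^m) (i'.val*2^m+r'.val)) := by
      rw [PiLp.inner_apply]
      simp [RCLike.inner_apply, vv, Aux15.vvec]
      exact Finset.sum_congr rfl fun j _ => mul_comm _ _
    rw [h1, Fin.sum_univ_eq_sum_range (fun j => ((-1:ℝ)^bitOverlap (j+2^m) (i.val*2^m+r.val)
            * (-1:ℝ)^bitOverlap (j+2^m) (i'.val*2^m+r'.val))) (2^n - 2^m),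
      Aux15.gram n m hmn i.val i'.val r.val r'.val i.isLt i'.isLt r.isLt r'.isLt]
    congr 1
    · by_cases h : i = i' ∧ r = r'
      · rw [if_pos h, if_pos ⟨congrArg Fin.val h.1, congrArg Fin.val h.2⟩]
      · rw [if_neg h, if_neg (fun hh => h ⟨Fin.ext hh.1, Fin.ext hh.2⟩)]
    · by_cases h : r = r'
      · rw [if_pos h, if_pos (congrArg Fin.val h)]
      · rw [if_neg (fun hh => h (Fin.ext hh)), if_neg h]
  have h2mlt : (2:ℝ)^m < 2^n := by
    exact_mod_cast Nat.pow_lt_pow_right (by norm_num) hmn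
  set c : ℝ := (2^n:ℝ) - 2^m with hc
  have hcpos : 0 < c := by rw [hc]; linarith
  have hcne : c ≠ 0 := hcpos.ne'
  have hdiag : ∀ i (a b : Fin (2^m)), ⟪vv i a, vv i b⟫_ℝ = if a = b then c else 0 := by
    intro i a b
    rw [hinner]
    by_cases h : a = b <;> simp [h, hc]
  have hcross : ∀ (a b : Fin (2^m)), ⟪vv i₁ a, vv i₂ b⟫_ℝ = if a = b then -(2^m:ℝ) else 0 := by
    intro a b
    rw [hinner]
    have : ¬(i₁ = i₂ ∧ a = b) := fun h => hne h.1
    rw [if_neg this]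
    by_cases h : a = b <;> simp [h]
  -- projection formula
  have hproj : ∀ (i : Fin (2^(n-m))) (x : EuclideanSpace ℝ (Fin (2^n - 2^m))),
      ((W i).orthogonalProjectionOnto x : EuclideanSpace ℝ (Fin (2^n - 2^m)))
        = c⁻¹ • ∑ a, ⟪vv i a, x⟫_ℝ • vv i a := by
    intro i x
    exact Aux15.proj_formula (vv i) c hcne (hdiag i) (W i) (hW i) x
  -- the composite map applied to a vector
  set f₁ := (W i₁).subtypeL.comp ((W i₁).orthogonalProjectionOnto) with hf₁
  set f₂ := (W i₂).subtypeL.comp ((W i₂).orthogonalProjectionOnto) with hf₂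
  have hf₁app : ∀ x, f₁ x = c⁻¹ • ∑ a, ⟪vv i₁ a, x⟫_ℝ • vv i₁ a := fun x => hproj i₁ x
  have hf₂app : ∀ x, f₂ x = c⁻¹ • ∑ a, ⟪vv i₂ a, x⟫_ℝ • vv i₂ a := fun x => hproj i₂ x
  have hf₁v : ∀ a : Fin (2^m), f₁ (vv i₂ a) = (c⁻¹ * (-(2^m:ℝ))) • vv i₁ a := by
    intro a
    rw [hf₁app]
    have h2 : ∀ b ∈ Finset.univ, ⟪vv i₁ b, vv i₂ a⟫_ℝ • vv i₁ b
        = if b = a then (-(2^m:ℝ)) • vv i₁ a else 0 := by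
      intro b _
      rw [hcross]
      by_cases h : b = a <;> simp [h]
    rw [Finset.sum_congr rfl h2, Finset.sum_ite_eq' _ a]
    simp [smul_smul]
  -- compute the trace
  set b := EuclideanSpace.basisFun (Fin (2^n - 2^m)) ℝ with hb
  have htrace : LinearMap.trace ℝ (EuclideanSpace ℝ (Fin (2^n - 2^m))) ((f₁.comp f₂).toLinearMap)
      = ∑ k : Fin (2^n - 2^m), (f₁ (f₂ (b.toBasis k))) k := by
    rw [LinearMap.trace_eq_matrix_trace ℝ b.toBasis]
    unfold Matrix.trace
    congr 1
    funext k
    rw [Matrix.diag_apply, LinearMap.toMatrix_apply]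
    rw [OrthonormalBasis.coe_toBasis_repr_apply]
    simp only [ContinuousLinearMap.coe_comp, LinearMap.coe_comp, Function.comp_apply,
      ContinuousLinearMap.coe_coe]
    rfl
  have hval : ∀ k : Fin (2^n - 2^m), (f₁ (f₂ (b.toBasis k))) k
      = ∑ a : Fin (2^m), (c⁻¹ * (c⁻¹ * (-(2^m:ℝ)))) * ((vv i₂ a) k * (vv i₁ a) k) := by
    intro k
    have hbk : b.toBasis k = EuclideanSpace.single k (1:ℝ) := by
      rw [OrthonormalBasis.coe_toBasis, hb, EuclideanSpace.basisFun_apply]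
    rw [hbk, hf₂app, map_smul, map_sum]
    have h3 : ∀ a ∈ Finset.univ, f₁ (⟪vv i₂ a, EuclideanSpace.single k (1:ℝ)⟫_ℝ • vv i₂ a)
        = (⟪vv i₂ a, EuclideanSpace.single k (1:ℝ)⟫_ℝ * (c⁻¹ * (-(2^m:ℝ)))) • vv i₁ a := by
      intro a _
      rw [map_smul, hf₁v, smul_smul]
    rw [Finset.sum_congr rfl h3]
    have hsingle : ∀ a : Fin (2^m), ⟪vv i₂ a, EuclideanSpace.single k (1:ℝ)⟫_ℝ = (vv i₂ a) k := by
      intro a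
      rw [EuclideanSpace.inner_single_right]
      simp
    simp only [hsingle]
    rw [PiLp.smul_apply, smul_eq_mul,
      WithLp.ofLp_sum, Finset.sum_apply,
      Finset.mul_sum]
    exact Finset.sum_congr rfl fun a _ => by rw [PiLp.smul_apply, smul_eq_mul]; ring
  have hsum : ∑ k : Fin (2^n - 2^m), (f₁ (f₂ (b.toBasis k))) k
      = (2^m : ℝ) * (c⁻¹ * c⁻¹ * (2^m:ℝ) * (2^m:ℝ)) := by
    rw [Finset.sum_congr rfl (fun k _ => hval k), Finset.sum_comm]
    have hinner_sum : ∀ a : Fin (2^m),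
        ∑ k : Fin (2^n - 2^m), ((vv i₂ a) k * (vv i₁ a) k) = -(2^m:ℝ) := by
      intro a
      have h4 : ∑ k : Fin (2^n - 2^m), ((vv i₂ a) k * (vv i₁ a) k) = ⟪vv i₂ a, vv i₁ a⟫_ℝ := by
        rw [PiLp.inner_apply]
        simp [RCLike.inner_apply]
        exact Finset.sum_congr rfl fun j _ => mul_comm _ _
      rw [h4, real_inner_comm, hcross]
      simp
    have h5 : ∀ a ∈ Finset.univ,
        ∑ k : Fin (2^n - 2^m), (c⁻¹ * (c⁻¹ * (-(2^m:ℝ)))) * ((vv i₂ a) k * (vv i₁ a) k)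
        = c⁻¹ * c⁻¹ * (2^m:ℝ) * (2^m:ℝ) := by
      intro a _
      rw [← Finset.mul_sum, hinner_sum]
      ring
    rw [Finset.sum_congr rfl h5, Finset.sum_const, Finset.card_univ, Fintype.card_fin]
    simp [nsmul_eq_mul]
  -- final arithmetic
  have htr : LinearMap.trace ℝ (EuclideanSpace ℝ (Fin (2^n - 2^m))) ((f₁.comp f₂).toLinearMap)
      = (2^m : ℝ) / ((2^(n-m) : ℝ) - 1)^2 := by
    rw [htrace, hsum]
    have hcsplit : c = (2^m : ℝ) * ((2^(n-m):ℝ) - 1) := by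
      rw [hc]
      have h6 : (2:ℝ)^n = 2^m * 2^(n-m) := by
        rw [← pow_add]; congr 1; omega
      rw [h6]; ring
    have h2 : (2:ℝ) ≤ (2:ℝ)^(n-m) := by
      calc (2:ℝ) = 2^1 := (pow_one 2).symm
      _ ≤ 2^(n-m) := pow_le_pow_right₀ (by norm_num) (by omega)
    have hne1 : ((2:ℝ)^(n-m) - 1) ≠ 0 := by linarith
    have h2m : (0:ℝ) < (2:ℝ)^m := by positivity
    rw [hcsplit]
    field_simp
  rw [htr]
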